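/- arXiv:1912.07583 — 5 statements merged into one kernel-verified Lean document; each statement's English description precedes it below -/
import Mathlib

section
/- Let k be a commutative ring and R = k[X₁^{±1}, ..., X_r^{±1}] the Laurent polynomial ring in r variables. Then for any l ≤ r and any positive integers n₁, ..., n_l, the sequence (X₁^{n₁} - 1, X₂^{n₂} - 1, ..., X_l^{n_l} - 1) is a regular sequence in R. -/
/-- The Laurent polynomial ring in `r` variables over `k`: the group algebra of `ℤ^r`. -/
abbrev MvLaurent (k : Type*) [CommRing k] (r : ℕ) : Type _ :=
  AddMonoidAlgebra k (Fin r →₀ ℤ)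

/-- The `i`-th Laurent variable `Xᵢ`. -/
noncomputable def MvLaurent.X {k : Type*} [CommRing k] {r : ℕ} (i : Fin r) : MvLaurent k r :=
  AddMonoidAlgebra.single (Finsupp.single i (1 : ℤ)) (1 : k)

namespace StmtAux

open AddMonoidAlgebra

variable {k : Type*} [CommRing k] {G : Type*} [AddCommGroup G]

lemma single_add_identity (u v : G) (c : k) :
    AddMonoidAlgebra.single (u + v) c
      = AddMonoidAlgebra.single u c * (AddMonoidAlgebra.single v (1 : k) - 1)
        + AddMonoidAlgebra.single u c := by
  rw [mul_sub, AddMonoidAlgebra.single_mul_single, mul_one, mul_one, sub_add_cancel]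

lemma single_sub_one_mem_of_closure {I : Ideal (AddMonoidAlgebra k G)} {T : Set G}
    (hT : ∀ b ∈ T, (AddMonoidAlgebra.single b (1 : k)) - 1 ∈ I) {h : G}
    (hh : h ∈ AddSubgroup.closure T) :
    (AddMonoidAlgebra.single h (1 : k)) - 1 ∈ I := by
  induction hh using AddSubgroup.closure_induction with
  | mem b hb => exact hT b hb
  | zero => simp [AddMonoidAlgebra.one_def]
  | add u v hu hv ihu ihv =>
      have : AddMonoidAlgebra.single (u + v) (1 : k) - 1
          = AddMonoidAlgebra.single u (1 : k) * (AddMonoidAlgebra.single v (1 : k) - 1)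
            + (AddMonoidAlgebra.single u (1 : k) - 1) := by
        rw [single_add_identity]; ring
      rw [this]
      exact I.add_mem (I.mul_mem_left _ ihv) ihu
  | neg u hu ihu =>
      have : AddMonoidAlgebra.single (-u) (1 : k) - 1
          = -(AddMonoidAlgebra.single (-u) (1 : k) * (AddMonoidAlgebra.single u (1 : k) - 1)) := by
        rw [mul_sub, AddMonoidAlgebra.single_mul_single, mul_one, mul_one, neg_add_cancel,
          ← AddMonoidAlgebra.one_def, neg_sub]
      rw [this]
      exact I.neg_mem (I.mul_mem_left _ ihu)

lemma eq_zero_of_single_mul_eq (a : G) (ha : ∀ m : ℕ, 0 < m → m • a ≠ 0)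
    {y : AddMonoidAlgebra k G} (h : AddMonoidAlgebra.single a 1 * y = y) : y = 0 := by
  by_contra hy
  obtain ⟨g, hg⟩ := Finsupp.support_nonempty_iff.mpr
    (fun (h0 : y.coeff = 0) => hy (by rw [← AddMonoidAlgebra.ofCoeff_coeff y, h0]; rfl))
  have step : ∀ m : ℕ, y.coeff (g + m • a) ≠ 0 := by
    intro m
    induction m with
    | zero => simpa using Finsupp.mem_support_iff.mp hg
    | succ m ih =>
        have h2 := congrArg (fun z : AddMonoidAlgebra k G => z.coeff (g + (m + 1) • a)) h
        simp only [AddMonoidAlgebra.coeff_single_mul_apply, one_mul] at h2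
        have e : -a + (g + (m + 1) • a) = g + m • a := by
          rw [succ_nsmul]; abel
        rw [e] at h2
        rw [← h2]; exact ih
  have hinj : Function.Injective (fun m : ℕ => g + m • a) := by
    intro m₁ m₂ hm
    simp only [add_right_inj] at hm
    by_contra hne
    rcases Nat.lt_or_ge m₁ m₂ with hlt | hge
    · exact ha (m₂ - m₁) (by omega) (by rw [sub_nsmul _ hlt.le, hm]; abel)
    · have hlt : m₂ < m₁ := by omega
      exact ha (m₁ - m₂) (by omega) (by rw [sub_nsmul _ hlt.le, hm]; abel)
  have hsub : Set.range (fun m : ℕ => g + m • a) ⊆ ↑y.coeff.support := by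
    rintro x ⟨m, rfl⟩
    exact Finsupp.mem_support_iff.mpr (step m)
  exact (y.coeff.support.finite_toSet.subset hsub).not_infinite
    (Set.infinite_range_of_injective hinj)

variable {r : ℕ}

/-- Reduction of exponents: coordinates `< j` are reduced modulo `M`. -/
noncomputable def red (M : Fin r → ℤ) (j : ℕ) (g : Fin r →₀ ℤ) : Fin r →₀ ℤ :=
  Finsupp.equivFunOnFinite.symm fun i => if i.val < j then g i % M i else g i

lemma red_apply (M : Fin r → ℤ) (j : ℕ) (g : Fin r →₀ ℤ) (i : Fin r) :
    red M j g i = if i.val < j then g i % M i else g i := rfl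

lemma red_add_single (M : Fin r → ℤ) (j : ℕ) {t : Fin r} (ht : t.val < j) (g : Fin r →₀ ℤ) :
    red M j (g + Finsupp.single t (M t)) = red M j g := by
  ext i
  rw [red_apply, red_apply, Finsupp.add_apply, Finsupp.single_apply]
  by_cases hij : i.val < j
  · simp only [hij, if_true]
    by_cases hit : t = i
    · subst hit; simp [Int.add_emod_right]
    · simp [hit]
  · have hit : t ≠ i := fun he => hij (he ▸ ht)
    simp [hij, hit]

lemma red_single_add (M : Fin r → ℤ) (j : ℕ) {t : Fin r} (ht : ¬ t.val < j) (c : ℤ)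
    (g : Fin r →₀ ℤ) :
    red M j (Finsupp.single t c + g) = Finsupp.single t c + red M j g := by
  ext i
  rw [Finsupp.add_apply, red_apply, red_apply, Finsupp.add_apply, Finsupp.single_apply]
  by_cases hij : i.val < j
  · have hit : t ≠ i := fun he => ht (he ▸ hij)
    simp [hij, hit]
  · simp [hij]

lemma sub_red_mem_closure (M : Fin r → ℤ) (j : ℕ) (g : Fin r →₀ ℤ) :
    g - red M j g ∈ AddSubgroup.closure
      {h : Fin r →₀ ℤ | ∃ t : Fin r, t.val < j ∧ h = Finsupp.single t (M t)} := by
  have hrepr : g - red M j g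
      = ∑ i ∈ (g - red M j g).support, Finsupp.single i ((g - red M j g) i) :=
    (Finsupp.sum_single _).symm
  rw [hrepr]
  apply AddSubgroup.sum_mem
  intro i _
  have hval : (g - red M j g) i = g i - red M j g i := by rw [Finsupp.sub_apply]
  by_cases hij : i.val < j
  · have h1 : (g - red M j g) i = M i * (g i / M i) := by
      rw [hval, red_apply, if_pos hij, Int.emod_def]; ring
    rw [h1]
    have h2 : Finsupp.single i (M i * (g i / M i)) = (g i / M i) • Finsupp.single i (M i) := by
      rw [Finsupp.smul_single, smul_eq_mul, mul_comm]
    rw [h2]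
    have hmem : Finsupp.single i (M i) ∈
        {h : Fin r →₀ ℤ | ∃ t : Fin r, t.val < j ∧ h = Finsupp.single t (M t)} :=
      ⟨i, hij, rfl⟩
    exact AddSubgroup.zsmul_mem _ (AddSubgroup.subset_closure hmem) _
  · have h1 : (g - red M j g) i = 0 := by rw [hval, red_apply, if_neg hij, sub_self]
    rw [h1, Finsupp.single_zero]
    exact AddSubgroup.zero_mem _

/-- The normal-form map: reduce exponents, as an additive monoid hom. -/
noncomputable def Nm (M : Fin r → ℤ) (j : ℕ) :
    AddMonoidAlgebra k (Fin r →₀ ℤ) →+ AddMonoidAlgebra k (Fin r →₀ ℤ) :=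
  { toFun := AddMonoidAlgebra.mapDomain (red M j)
    map_zero' := AddMonoidAlgebra.mapDomain_zero _
    map_add' := AddMonoidAlgebra.mapDomain_add _ }

lemma Nm_single (M : Fin r → ℤ) (j : ℕ) (g : Fin r →₀ ℤ) (c : k) :
    Nm M j (AddMonoidAlgebra.single g c) = AddMonoidAlgebra.single (red M j g) c :=
  AddMonoidAlgebra.mapDomain_single

lemma sub_Nm_mem (M : Fin r → ℤ) (j : ℕ)
    {I : Ideal (AddMonoidAlgebra k (Fin r →₀ ℤ))}
    (hgen : ∀ t : Fin r, t.val < j →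
      AddMonoidAlgebra.single (Finsupp.single t (M t)) (1 : k) - 1 ∈ I)
    (x : AddMonoidAlgebra k (Fin r →₀ ℤ)) :
    x - Nm M j x ∈ I := by
  induction x using AddMonoidAlgebra.induction_linear with
  | zero => simp
  | add f g ihf ihg =>
      rw [map_add]
      have h := I.add_mem ihf ihg
      rwa [sub_add_sub_comm] at h
  | single g c =>
      rw [Nm_single]
      have e : red M j g + (g - red M j g) = g := by abel
      have h0 := single_add_identity (k := k) (red M j g) (g - red M j g) c
      rw [e] at h0
      have h : (AddMonoidAlgebra.single g c : AddMonoidAlgebra k (Fin r →₀ ℤ))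
            - AddMonoidAlgebra.single (red M j g) c
          = AddMonoidAlgebra.single (red M j g) c
              * (AddMonoidAlgebra.single (g - red M j g) (1 : k) - 1) := by
        rw [h0]; ring
      rw [h]
      refine I.mul_mem_left _ (single_sub_one_mem_of_closure ?_ (sub_red_mem_closure M j g))
      rintro b ⟨t, ht, rfl⟩
      exact hgen t ht

lemma Nm_single_mul (M : Fin r → ℤ) (j : ℕ) {t : Fin r} (ht : t.val < j)
    (z : AddMonoidAlgebra k (Fin r →₀ ℤ)) :
    Nm M j (AddMonoidAlgebra.single (Finsupp.single t (M t)) (1 : k) * z) = Nm M j z := by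
  induction z using AddMonoidAlgebra.induction_linear with
  | zero => simp
  | add f g ihf ihg => rw [mul_add, map_add, ihf, ihg, map_add]
  | single g c =>
      rw [AddMonoidAlgebra.single_mul_single, one_mul, Nm_single, Nm_single,
        add_comm, red_add_single M j ht]

lemma Nm_eq_zero_of_mem_span (M : Fin r → ℤ) (j : ℕ)
    {S : Set (AddMonoidAlgebra k (Fin r →₀ ℤ))}
    (hS : ∀ s ∈ S, ∃ t : Fin r, t.val < j ∧
      s = AddMonoidAlgebra.single (Finsupp.single t (M t)) (1 : k) - 1)
    {y : AddMonoidAlgebra k (Fin r →₀ ℤ)} (hy : y ∈ Ideal.span S) :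
    Nm M j y = 0 := by
  have main : ∀ y ∈ Ideal.span S, ∀ z, Nm (k := k) M j (y * z) = 0 := by
    intro y hy
    induction hy using Submodule.span_induction with
    | mem s hs =>
        intro z
        obtain ⟨t, ht, rfl⟩ := hS s hs
        rw [sub_mul, one_mul, map_sub, Nm_single_mul M j ht, sub_self]
    | zero => intro z; simp
    | add a b _ _ iha ihb =>
        intro z
        rw [add_mul, map_add, iha, ihb, add_zero]
    | smul c a _ iha =>
        intro z
        have h : (c • a) * z = a * (c * z) := by
          rw [smul_eq_mul]; ring
        rw [h, iha]
  have h := main y hy 1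
  rwa [mul_one] at h

lemma Nm_single_mul_comm (M : Fin r → ℤ) (j : ℕ) {t : Fin r} (ht : ¬ t.val < j)
    (c : ℤ) (x : AddMonoidAlgebra k (Fin r →₀ ℤ)) :
    Nm M j (AddMonoidAlgebra.single (Finsupp.single t c) (1 : k) * x)
      = AddMonoidAlgebra.single (Finsupp.single t c) (1 : k) * Nm M j x := by
  induction x using AddMonoidAlgebra.induction_linear with
  | zero => simp
  | add f g ihf ihg =>
      rw [mul_add, map_add, ihf, ihg, map_add, mul_add]
  | single g d =>
      rw [AddMonoidAlgebra.single_mul_single, one_mul, Nm_single, Nm_single,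
        red_single_add M j ht, AddMonoidAlgebra.single_mul_single, one_mul]

/-- Members of the truncation of a `List.ofFn`. -/
lemma mem_take_ofFn {α : Type*} {l : ℕ} (f : Fin l → α) (j : ℕ) {y : α} :
    y ∈ (List.ofFn f).take j ↔ ∃ s : Fin l, s.val < j ∧ f s = y := by
  constructor
  · intro hy
    obtain ⟨m, hm, he⟩ := List.mem_iff_getElem.mp hy
    have hm' : m < j ∧ m < l := by
      simpa [List.length_take, List.length_ofFn] using hm
    refine ⟨⟨m, hm'.2⟩, hm'.1, ?_⟩
    rw [← he, List.getElem_take, List.getElem_ofFn]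
  · rintro ⟨s, hs, rfl⟩
    refine List.mem_iff_getElem.mpr ⟨s.val, ?_, ?_⟩
    · simp only [List.length_take, List.length_ofFn]
      exact lt_min hs s.isLt
    · rw [List.getElem_take, List.getElem_ofFn]

end StmtAux

open StmtAux in
/-- In the Laurent polynomial ring `k[X₁^{±1},...,X_r^{±1}]`, for any `l ≤ r`
and positive integers `n₁,...,n_l`, the sequence `(X₁^{n₁} - 1, ..., X_l^{n_l} - 1)` is a
regular sequence. -/
theorem stmt0 (k : Type*) [CommRing k] (r l : ℕ) (hl : l ≤ r) (n : Fin l → ℕ)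
    (hn : ∀ i, 0 < n i) :
    RingTheory.Sequence.IsWeaklyRegular (MvLaurent k r)
      (List.ofFn fun i : Fin l =>
        ((MvLaurent.X (Fin.castLE hl i)) ^ (n i) - 1 : MvLaurent k r)) := by
  classical
  set f : Fin l → MvLaurent k r :=
    fun i => (MvLaurent.X (Fin.castLE hl i)) ^ (n i) - 1 with hf
  -- the exponent vector function
  set M : Fin r → ℤ := fun t => if h : t.val < l then (n ⟨t.val, h⟩ : ℤ) else 1 with hM
  have hMpos : ∀ t : Fin r, 0 < M t := by
    intro t
    rw [hM]
    by_cases h : t.val < l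
    · simp only [h, dif_pos]
      exact_mod_cast hn ⟨t.val, h⟩
    · simp [h]
  have hXdef : ∀ i : Fin r, MvLaurent.X (k := k) i
      = AddMonoidAlgebra.single (Finsupp.single i (1 : ℤ)) (1 : k) := fun _ => rfl
  have hfX : ∀ s : Fin l,
      f s = AddMonoidAlgebra.single
        (Finsupp.single (Fin.castLE hl s) (M (Fin.castLE hl s))) (1 : k) - 1 := by
    intro s
    have hMs : M (Fin.castLE hl s) = (n s : ℤ) := by
      rw [hM]
      have h : (Fin.castLE hl s).val < l := s.isLt
      simp only [h, dif_pos]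
      congr 1
    show MvLaurent.X (Fin.castLE hl s) ^ n s - 1 = _
    congr 1
    rw [hXdef, AddMonoidAlgebra.single_pow, one_pow, Finsupp.smul_single, hMs]
    norm_num
  rw [RingTheory.Sequence.isWeaklyRegular_iff]
  intro j hj
  have hjl : j < l := by simpa using hj
  -- identify the ideal
  have hIdeal : Ideal.ofList ((List.ofFn f).take j) = Ideal.span
      {s : MvLaurent k r | ∃ t : Fin r, t.val < j ∧
        s = AddMonoidAlgebra.single (Finsupp.single t (M t)) (1 : k) - 1} := by
    apply le_antisymm
    · rw [Ideal.ofList, Ideal.span_le]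
      intro y hy
      obtain ⟨s, hs, rfl⟩ := (mem_take_ofFn f j).mp hy
      exact Ideal.subset_span ⟨Fin.castLE hl s, hs, hfX s⟩
    · rw [Ideal.span_le]
      rintro y ⟨t, ht, rfl⟩
      have htl : t.val < l := ht.trans hjl
      have hts : t = Fin.castLE hl ⟨t.val, htl⟩ := by ext; rfl
      apply Ideal.subset_span
      show _ ∈ {a | a ∈ (List.ofFn f).take j}
      rw [Set.mem_setOf_eq, mem_take_ofFn f j]
      exact ⟨⟨t.val, htl⟩, ht, by rw [hfX, ← hts]⟩
  rw [isSMulRegular_quotient_iff_mem_of_smul_mem]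
  intro x hx
  -- rewrite the smul-top submodule as the ideal itself
  have hNeq : (Ideal.ofList ((List.ofFn f).take j) • ⊤
        : Submodule (MvLaurent k r) (MvLaurent k r))
      = Ideal.ofList ((List.ofFn f).take j) := by
    rw [smul_eq_mul, Ideal.mul_top]
  rw [hNeq, hIdeal] at hx ⊢
  -- the current element
  have hgetElem : (List.ofFn f)[j] = f ⟨j, hjl⟩ := List.getElem_ofFn ..
  rw [hgetElem, hfX ⟨j, hjl⟩] at hx
  set tj : Fin r := Fin.castLE hl ⟨j, hjl⟩ with htj
  have htjval : ¬ tj.val < j := by simp [htj]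
  set I : Ideal (MvLaurent k r) := Ideal.span
      {s : MvLaurent k r | ∃ t : Fin r, t.val < j ∧
        s = AddMonoidAlgebra.single (Finsupp.single t (M t)) (1 : k) - 1} with hI
  have hgen : ∀ t : Fin r, t.val < j →
      AddMonoidAlgebra.single (Finsupp.single t (M t)) (1 : k) - 1 ∈ I :=
    fun t ht => Ideal.subset_span ⟨t, ht, rfl⟩
  -- from hx : elem • x ∈ I, conclude Nm x = 0
  have hmul : (AddMonoidAlgebra.single (Finsupp.single tj (M tj)) (1 : k) - 1) * x ∈ I := by
    rwa [smul_eq_mul] at hx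
  have hmap0 : Nm M j ((AddMonoidAlgebra.single (Finsupp.single tj (M tj)) (1 : k) - 1) * x)
      = 0 := Nm_eq_zero_of_mem_span M j (fun s hs => hs) hmul
  have hexpand : (AddMonoidAlgebra.single (Finsupp.single tj (M tj)) (1 : k) - 1) * x
      = AddMonoidAlgebra.single (Finsupp.single tj (M tj)) (1 : k) * x - x := by ring
  rw [hexpand, map_sub, Nm_single_mul_comm M j htjval, sub_eq_zero] at hmap0
  have hzero : Nm M j x = 0 := by
    apply eq_zero_of_single_mul_eq (Finsupp.single tj (M tj)) _ hmap0
    intro m hm he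
    have hcoord : (m : ℤ) * M tj = 0 := by
      have h := congrArg (fun z : Fin r →₀ ℤ => z tj) he
      simpa [Finsupp.smul_single, Finsupp.single_apply] using h
    have hMt := hMpos tj
    nlinarith [hcoord, hMt, Int.natCast_pos.mpr hm]
  have hmem := sub_Nm_mem (k := k) M j hgen x
  rwa [hzero, sub_zero] at hmem
end

section
/- Let k be a commutative ring, R a commutative k-algebra, y ∈ R a nonzerodivisor generating the kernel of a k-algebra augmentation θ : R → k, and n ∈ ℕ. Then every x ∈ R can be written uniquely as x = Σ_{i=0}^{n-1} a_i·y^i + x̃·y^n with a_i ∈ k and x̃ ∈ R. In particular R/(y^n) is a free k-module with basis 1, y, ..., y^{n-1}. -/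
theorem stmt7_aux {k R : Type*} [CommRing k] [CommRing R] [Algebra k R]
    (θ : R →ₐ[k] k) (y : R) (hy : y ∈ nonZeroDivisors R)
    (hker : RingHom.ker θ.toRingHom = Ideal.span {y}) (n : ℕ) :
    ∀ x : R, ∃! p : (Fin n → k) × R,
        x = (∑ i : Fin n, algebraMap k R (p.1 i) * y ^ (i : ℕ)) + p.2 * y ^ n := by
  have hθy : θ y = 0 := by
    have : y ∈ RingHom.ker θ.toRingHom := by
      rw [hker]; exact Ideal.mem_span_singleton_self y
    exact this
  induction n with
  | zero =>
    intro x
    refine ⟨((fun _ => 0), x), by simp, ?_⟩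
    rintro ⟨c, z⟩ hq
    simp only [Finset.univ_eq_empty, Finset.sum_empty, pow_zero, mul_one, zero_add] at hq
    exact Prod.ext (funext fun i => i.elim0) hq.symm
  | succ n ih =>
    have key : ∀ (c : Fin (n+1) → k) (z : R),
        (∑ i : Fin (n+1), algebraMap k R (c i) * y ^ (i : ℕ)) + z * y ^ (n+1) =
        algebraMap k R (c 0) +
          ((∑ i : Fin n, algebraMap k R (c i.succ) * y ^ (i : ℕ)) + z * y ^ n) * y := by
      intro c z
      rw [Fin.sum_univ_succ]
      simp only [Fin.val_zero, pow_zero, mul_one, Fin.val_succ]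
      simp only [pow_succ, ← mul_assoc]
      rw [← Finset.sum_mul]
      ring
    intro x
    have hmem : x - algebraMap k R (θ x) ∈ Ideal.span {y} := by
      rw [← hker]
      show θ (x - algebraMap k R (θ x)) = 0
      simp
    obtain ⟨r, hr⟩ := Ideal.mem_span_singleton'.mp hmem
    have hxr : x = algebraMap k R (θ x) + r * y := by linear_combination -hr
    obtain ⟨⟨b, xt⟩, hb, hbu⟩ := ih r
    simp only at hb
    refine ⟨(Fin.cons (θ x) b, xt), ?_, ?_⟩
    · show x = _ + _
      rw [key (Fin.cons (θ x) b) xt, Fin.cons_zero]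
      simp only [Fin.cons_succ]
      rw [← hb, ← hxr]
    · rintro ⟨c, z⟩ hq
      simp only at hq
      rw [key c z] at hq
      have hc0 : c 0 = θ x := by
        have h2 := congrArg θ hq
        simp [hθy] at h2
        exact h2.symm
      rw [hc0] at hq
      have hrs : r = (∑ i : Fin n, algebraMap k R (c i.succ) * y ^ (i : ℕ)) + z * y ^ n := by
        have h1 : (r - ((∑ i : Fin n, algebraMap k R (c i.succ) * y ^ (i : ℕ)) + z * y ^ n)) * y
            = 0 := by linear_combination hq - hxr
        exact sub_eq_zero.mp (mem_nonZeroDivisors_iff_right.mp hy _ h1)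
      have h3 := hbu ((fun i => c i.succ), z) hrs
      rw [Prod.mk.injEq] at h3
      refine Prod.ext ?_ h3.2
      show c = Fin.cons (θ x) b
      funext i
      refine Fin.cases ?_ ?_ i
      · rw [hc0, Fin.cons_zero]
      · intro j
        rw [Fin.cons_succ, ← h3.1]

/-- If `y` is a nonzerodivisor of a commutative `k`-algebra `R` generating
the kernel of a `k`-algebra augmentation `θ : R → k`, then every `x ∈ R` can be written
uniquely as `x = Σ_{i<n} aᵢ·yⁱ + x̃·yⁿ` with `aᵢ ∈ k`, `x̃ ∈ R`; in particular `R/(yⁿ)` is a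
free `k`-module with basis (the classes of) `1, y, ..., y^{n-1}`. -/
theorem stmt7 {k R : Type*} [CommRing k] [CommRing R] [Algebra k R]
    (θ : R →ₐ[k] k) (y : R) (hy : y ∈ nonZeroDivisors R)
    (hker : RingHom.ker θ.toRingHom = Ideal.span {y}) (n : ℕ) :
    (∀ x : R, ∃! p : (Fin n → k) × R,
        x = (∑ i : Fin n, algebraMap k R (p.1 i) * y ^ (i : ℕ)) + p.2 * y ^ n) ∧
    ∃ b : Module.Basis (Fin n) k (R ⧸ Ideal.span {y ^ n}),
      ∀ i : Fin n, b i = Ideal.Quotient.mk (Ideal.span {y ^ n}) (y ^ (i : ℕ)) := by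
  classical
  have hex := stmt7_aux θ y hy hker n
  refine ⟨hex, ?_⟩
  set I := Ideal.span {y ^ n} with hI
  set v : Fin n → R ⧸ I := fun i => Ideal.Quotient.mk I (y ^ (i : ℕ)) with hv
  set f : (Fin n → k) →ₗ[k] R ⧸ I := Fintype.linearCombination k v with hfdef
  have hf : ∀ a : Fin n → k,
      f a = Ideal.Quotient.mk I (∑ i : Fin n, algebraMap k R (a i) * y ^ (i : ℕ)) := by
    intro a
    rw [hfdef, Fintype.linearCombination_apply, map_sum]
    refine Finset.sum_congr rfl fun i _ => ?_
    rw [hv]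
    show a i • Ideal.Quotient.mk I (y ^ (i : ℕ)) = _
    rw [map_mul, ← Ideal.Quotient.algebraMap_eq,
      ← IsScalarTower.algebraMap_apply k R (R ⧸ I), Algebra.smul_def]
  have hinj : Function.Injective f := by
    rw [injective_iff_map_eq_zero]
    intro a ha
    rw [hf] at ha
    obtain ⟨c, hc⟩ := Ideal.mem_span_singleton'.mp
      ((Ideal.Quotient.eq_zero_iff_mem).mp ha)
    have h1 := (hex (∑ i : Fin n, algebraMap k R (a i) * y ^ (i : ℕ))).unique
      (y₁ := (a, 0)) (y₂ := (fun _ => 0, c)) (by simp) (by simp [hc])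
    exact congrArg Prod.fst h1
  have hsurj : Function.Surjective f := by
    intro q
    obtain ⟨x, rfl⟩ := Ideal.Quotient.mk_surjective q
    obtain ⟨⟨a, xt⟩, hp, -⟩ := hex x
    refine ⟨a, ?_⟩
    rw [hf, hp]
    simp only [map_add]
    have : Ideal.Quotient.mk I ((a, xt).2 * y ^ n) = 0 := by
      rw [Ideal.Quotient.eq_zero_iff_mem]
      exact Ideal.mul_mem_left _ _ (Ideal.mem_span_singleton_self _)
    rw [this, add_zero]
  set e := LinearEquiv.ofBijective f ⟨hinj, hsurj⟩ with he
  refine ⟨Module.Basis.ofEquivFun e.symm, fun i => ?_⟩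
  rw [Module.Basis.coe_ofEquivFun]
  show e.symm.symm (Pi.single i 1) = _
  rw [LinearEquiv.symm_symm, he]
  show f (Pi.single i 1) = _
  rw [Fintype.linearCombination_apply_single, one_smul]
end

section
/- Let X : (elementary abelian 2-groups)^op → CommRing be a functor and e ∈ X(C₂) an element such that for every elementary abelian 2-group A and nontrivial character V : A → C₂, the sequence 0 → X(A) --(·V*(e))--> X(A) --res--> X(ker V) → 0 is exact. Then 2 = 0 in X(1), where 1 is the trivial group. -/
open CategoryTheory Opposite

/-- The category of elementary abelian 2-groups, modeled as finite `ℤ/2`-vector spaces. -/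
abbrev EA2 : Type 1 := FGModuleCat (ZMod 2)

/-- The cyclic group `C₂` of order 2. -/
noncomputable def C2 : EA2 := FGModuleCat.of (ZMod 2) (ZMod 2)

/-- The trivial elementary abelian 2-group. -/
noncomputable def trivGrp : EA2 := FGModuleCat.of (ZMod 2) PUnit

/-- The kernel of a character `V : A → C₂`, as an elementary abelian 2-group. -/
noncomputable def kerObj {A : EA2} (V : A ⟶ C2) : EA2 :=
  FGModuleCat.of (ZMod 2) (LinearMap.ker V.hom.hom)

/-- The inclusion `ker V ↪ A`. -/
noncomputable def kerIncl {A : EA2} (V : A ⟶ C2) : kerObj V ⟶ A :=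
  ObjectProperty.homMk (ModuleCat.ofHom (LinearMap.ker V.hom.hom).subtype)

/-- A global 2-torsion group law: a contravariant functor `X` from elementary abelian
2-groups to commutative rings together with a coordinate `e ∈ X(C₂)` such that for every
elementary abelian 2-group `A` and nontrivial character `V : A → C₂` the sequence
`0 → X(A) --(·e_V)--> X(A) --res--> X(ker V) → 0` is exact, where `e_V = X(V)(e)`. -/
structure GlobalTwoTorsionGroupLaw where
  X : EA2ᵒᵖ ⥤ CommRingCat
  e : X.obj (op C2)
  euler_regular : ∀ (A : EA2) (V : A ⟶ C2), V ≠ 0 →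
    Function.Injective (fun x : X.obj (op A) => x * X.map V.op e)
  euler_exact : ∀ (A : EA2) (V : A ⟶ C2), V ≠ 0 → ∀ x : X.obj (op A),
    X.map (kerIncl V).op x = 0 ↔ ∃ y : X.obj (op A), x = y * X.map V.op e
  res_surjective : ∀ (A : EA2) (V : A ⟶ C2), V ≠ 0 →
    Function.Surjective (X.map (kerIncl V).op)

noncomputable def AA : EA2 := FGModuleCat.of (ZMod 2) (ZMod 2 × ZMod 2)
noncomputable def p1 : AA ⟶ C2 := ObjectProperty.homMk (ModuleCat.ofHom (LinearMap.fst (ZMod 2) (ZMod 2) (ZMod 2)))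
noncomputable def p2 : AA ⟶ C2 := ObjectProperty.homMk (ModuleCat.ofHom (LinearMap.snd (ZMod 2) (ZMod 2) (ZMod 2)))
noncomputable def sig : AA ⟶ C2 := p1 + p2
noncomputable def i1 : C2 ⟶ AA := ObjectProperty.homMk (ModuleCat.ofHom (LinearMap.inl (ZMod 2) (ZMod 2) (ZMod 2)))
noncomputable def i2 : C2 ⟶ AA := ObjectProperty.homMk (ModuleCat.ofHom (LinearMap.inr (ZMod 2) (ZMod 2) (ZMod 2)))
noncomputable def incl : trivGrp ⟶ C2 := 0

lemma id_ne_zero : (𝟙 C2 : C2 ⟶ C2) ≠ 0 := by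
  intro h
  have h1 : (1 : ZMod 2) = 0 := LinearMap.congr_fun (congrArg (fun f => f.hom.hom) h) (1 : ZMod 2)
  exact one_ne_zero h1

lemma sig_ne_zero : sig ≠ 0 := by
  intro h
  have h1 : (1 : ZMod 2) + 0 = 0 := LinearMap.congr_fun (congrArg (fun f => f.hom.hom) h) ((1, 0) : ZMod 2 × ZMod 2)
  rw [add_zero] at h1
  exact one_ne_zero h1

/-- Every global 2-torsion group law takes values in `𝔽₂`-algebras:
`2 = 0` in `X(1)` for the trivial group `1`. -/
theorem stmt11 (L : GlobalTwoTorsionGroupLaw) : (2 : L.X.obj (op trivGrp)) = 0 := by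
  set X := L.X with hX
  set e := L.e with he
  -- restriction of e to the trivial subgroup of C2 vanishes
  have hres : X.map (kerIncl (𝟙 C2)).op e = 0 := by
    rw [L.euler_exact C2 (𝟙 C2) id_ne_zero]
    exact ⟨1, by simp [he]⟩
  -- pullback of e along any zero map is zero
  have hzero : ∀ (B : EA2) (f : B ⟶ C2), f = 0 → X.map f.op e = 0 := by
    intro B f hf
    have hfac : f = (0 : B ⟶ kerObj (𝟙 C2)) ≫ kerIncl (𝟙 C2) := by
      rw [hf]; exact (Limits.zero_comp).symm
    rw [hfac, op_comp, X.map_comp, comp_apply, hres, map_zero]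
  -- e_{p1} - e_{p2} vanishes on ker σ
  have hker : X.map (kerIncl sig).op (X.map p1.op e - X.map p2.op e) = 0 := by
    rw [map_sub]
    have h12 : kerIncl sig ≫ p1 = kerIncl sig ≫ p2 := by
      ext z
      change LinearMap.ker sig.hom.hom at z
      obtain ⟨⟨x, y⟩, hxy⟩ := z
      have hx : x + y = 0 := hxy
      show x = y
      have key : ∀ a b : ZMod 2, a + b = 0 → a = b := by decide
      exact key x y hx
    have : X.map (kerIncl sig).op (X.map p1.op e) = X.map (kerIncl sig).op (X.map p2.op e) := by
      rw [← comp_apply, ← comp_apply, ← X.map_comp, ← X.map_comp, ← op_comp, ← op_comp, h12]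
    rw [this, sub_self]
  obtain ⟨c, hc⟩ := (L.euler_exact AA sig sig_ne_zero _).mp hker
  -- pull back along i1
  have pull : ∀ (j : C2 ⟶ AA), j ≫ sig = 𝟙 C2 →
      X.map j.op (X.map p1.op e) - X.map j.op (X.map p2.op e)
        = X.map j.op c * X.map (𝟙 C2).op e := by
    intro j hj
    have := congrArg (X.map j.op) hc
    rw [map_sub, map_mul] at this
    rw [this]
    congr 1
    rw [← comp_apply, ← X.map_comp, ← op_comp, hj]
  -- along i1 : p1 pulls to id, p2 to 0, giving (i1* c) e = e
  have h1 : X.map i1.op c = 1 := by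
    apply L.euler_regular C2 (𝟙 C2) id_ne_zero
    show X.map i1.op c * X.map (𝟙 C2).op e = 1 * X.map (𝟙 C2).op e
    have hp1 : i1 ≫ p1 = 𝟙 C2 := by ext x; rfl
    have hp2 : i1 ≫ p2 = 0 := by ext x; rfl
    have hs : i1 ≫ sig = 𝟙 C2 := by ext; exact add_zero (M := ZMod 2) 1
    have key := pull i1 hs
    have e1 : X.map i1.op (X.map p1.op e) = X.map (𝟙 C2).op e := by
      rw [← comp_apply, ← X.map_comp, ← op_comp, hp1]
    have e2 : X.map i1.op (X.map p2.op e) = 0 := by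
      rw [← comp_apply, ← X.map_comp, ← op_comp]
      exact hzero C2 (i1 ≫ p2) hp2
    rw [e1, e2, sub_zero] at key
    rw [← key, one_mul]
  -- along i2 : p1 pulls to 0, p2 to id, giving (i2* c) e = -e
  have h2 : X.map i2.op c = -1 := by
    apply L.euler_regular C2 (𝟙 C2) id_ne_zero
    show X.map i2.op c * X.map (𝟙 C2).op e = -1 * X.map (𝟙 C2).op e
    have hp1 : i2 ≫ p1 = 0 := by ext x; rfl
    have hp2 : i2 ≫ p2 = 𝟙 C2 := by ext x; rfl
    have hs : i2 ≫ sig = 𝟙 C2 := by ext; exact zero_add (M := ZMod 2) 1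
    have key := pull i2 hs
    have e1 : X.map i2.op (X.map p1.op e) = 0 := by
      rw [← comp_apply, ← X.map_comp, ← op_comp]
      exact hzero C2 (i2 ≫ p1) hp1
    have e2 : X.map i2.op (X.map p2.op e) = X.map (𝟙 C2).op e := by
      rw [← comp_apply, ← X.map_comp, ← op_comp, hp2]
    rw [e1, e2, zero_sub] at key
    rw [← key, neg_one_mul]
  -- both composites with incl agree
  have hcomp : incl ≫ i1 = incl ≫ i2 := by ext x; rfl
  have : X.map incl.op (X.map i1.op c) = X.map incl.op (X.map i2.op c) := by
    rw [← comp_apply, ← comp_apply, ← X.map_comp, ← X.map_comp, ← op_comp, ← op_comp, hcomp]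
  rw [h1, h2, map_one, map_neg, map_one] at this
  linear_combination this
end

section
/- Let X be a global 2-torsion group law. Then for every x ∈ X(C₂) and every n ∈ ℕ there exist unique elements x₀, ..., x_{n-1} ∈ X(1) and x̃ ∈ X(C₂) such that x = Σ_{i=0}^{n-1} p*(xᵢ)·eⁱ + x̃·eⁿ, where p : C₂ → 1 is the projection. -/
open CategoryTheory Opposite

/-- The projection `C₂ → 1` to the trivial group. -/
noncomputable def projTriv : C2 ⟶ trivGrp := 0

instance : Subsingleton (trivGrp : Type) := inferInstanceAs (Subsingleton PUnit)
instance : Subsingleton ((trivGrp : EA2).obj : Type) := inferInstanceAs (Subsingleton PUnit)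

instance : Subsingleton (kerObj (𝟙 C2) : Type) := by
  constructor
  intro a b
  apply Subtype.ext
  have ha' : a.1 = 0 := a.2
  have hb' : b.1 = 0 := b.2
  rw [ha', hb']

instance : Subsingleton ((kerObj (𝟙 C2)).obj : Type) :=
  inferInstanceAs (Subsingleton (kerObj (𝟙 C2) : Type))

noncomputable def gmap : kerObj (𝟙 C2) ⟶ trivGrp := 0

instance : IsIso gmap := by
  refine ⟨(0 : trivGrp ⟶ kerObj (𝟙 C2)), ?_, ?_⟩ <;>
    exact ObjectProperty.hom_ext _ (ModuleCat.hom_ext (LinearMap.ext fun _ => Subsingleton.elim _ _))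

lemma ker_proj_eq : kerIncl (𝟙 C2) ≫ projTriv = gmap :=
  ObjectProperty.hom_ext _ (ModuleCat.hom_ext (LinearMap.ext fun _ => Subsingleton.elim _ _))

variable (L : GlobalTwoTorsionGroupLaw)

lemma e_id : L.X.map (𝟙 C2 : C2 ⟶ C2).op L.e = L.e := by
  have : ((𝟙 C2 : C2 ⟶ C2).op) = 𝟙 (op C2) := rfl
  rw [this, L.X.map_id]
  rfl

lemma res_p (a : L.X.obj (op trivGrp)) :
    L.X.map (kerIncl (𝟙 C2)).op (L.X.map projTriv.op a) = L.X.map gmap.op a := by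
  rw [← comp_apply, ← L.X.map_comp, ← op_comp, ker_proj_eq]

lemma res_mul_e (y : L.X.obj (op C2)) :
    L.X.map (kerIncl (𝟙 C2)).op (y * L.e) = 0 :=
  (L.euler_exact C2 (𝟙 C2) id_ne_zero _).mpr ⟨y, by rw [e_id]⟩

lemma G_bij : Function.Bijective (L.X.map gmap.op) := by
  have : IsIso (L.X.map gmap.op) := inferInstance
  exact ConcreteCategory.bijective_of_isIso _

lemma step (x : L.X.obj (op C2)) :
    ∃! q : L.X.obj (op trivGrp) × L.X.obj (op C2),
      x = L.X.map projTriv.op q.1 + q.2 * L.e := by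
  set r := L.X.map (kerIncl (𝟙 C2)).op with hr
  obtain ⟨x₀, hx₀⟩ := (G_bij L).surjective (r x)
  have hres : r (x - L.X.map projTriv.op x₀) = 0 := by
    rw [map_sub, res_p, hx₀, sub_self]
  obtain ⟨y, hy⟩ := (L.euler_exact C2 (𝟙 C2) id_ne_zero _).mp hres
  rw [e_id] at hy
  refine ⟨(x₀, y), by dsimp; linear_combination hy, ?_⟩
  rintro ⟨a, w⟩ h
  dsimp at h
  have h1 : L.X.map gmap.op a = L.X.map gmap.op x₀ := by
    calc L.X.map gmap.op a = r (L.X.map projTriv.op a) := (res_p L a).symm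
      _ = r (L.X.map projTriv.op a) + r (w * L.e) := by rw [res_mul_e, add_zero]
      _ = r x := by rw [← map_add, ← h]
      _ = L.X.map gmap.op x₀ := hx₀.symm
  have ha : a = x₀ := (G_bij L).injective h1
  have hw : w * L.e = y * L.e := by
    subst ha
    have : L.X.map projTriv.op a + w * L.e = L.X.map projTriv.op a + y * L.e := by
      rw [← h]; linear_combination hy
    exact add_left_cancel this
  have : w * L.X.map (𝟙 C2 : C2 ⟶ C2).op L.e = y * L.X.map (𝟙 C2 : C2 ⟶ C2).op L.e := by
    rw [e_id]; exact hw
  have := L.euler_regular C2 (𝟙 C2) id_ne_zero this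
  simp [ha, this]

/-- For a global 2-torsion group law `X`, every `x ∈ X(C₂)` admits, for
each `n`, a unique decomposition `x = Σ_{i<n} p*(xᵢ)·eⁱ + x̃·eⁿ` with `xᵢ ∈ X(1)`,
`x̃ ∈ X(C₂)`, where `p : C₂ → 1` is the projection. -/
theorem stmt13 (L : GlobalTwoTorsionGroupLaw) (x : L.X.obj (op C2)) (n : ℕ) :
    ∃! q : (Fin n → L.X.obj (op trivGrp)) × L.X.obj (op C2),
      x = (∑ i : Fin n, L.X.map projTriv.op (q.1 i) * L.e ^ (i : ℕ)) + q.2 * L.e ^ n := by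
  induction n generalizing x with
  | zero =>
    refine ⟨(Fin.elim0, x), by simp, ?_⟩
    rintro ⟨f, w⟩ h
    simp only [Finset.univ_eq_empty, Finset.sum_empty, pow_zero, mul_one, zero_add] at h
    refine Prod.ext (funext fun i => i.elim0) h.symm
  | succ n ih =>
    obtain ⟨⟨x₀, xt⟩, hx, hxu⟩ := step L x
    obtain ⟨⟨y, z⟩, hy, hyu⟩ := ih xt
    dsimp at hx hy
    have key : ∀ (f : Fin (n+1) → L.X.obj (op trivGrp)) (w : L.X.obj (op C2)),
        (∑ i : Fin (n+1), L.X.map projTriv.op (f i) * L.e ^ (i : ℕ)) + w * L.e ^ (n+1)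
        = L.X.map projTriv.op (f 0) +
          ((∑ i : Fin n, L.X.map projTriv.op (f i.succ) * L.e ^ (i : ℕ)) + w * L.e ^ n) * L.e := by
      intro f w
      simp only [Fin.sum_univ_succ, Fin.val_zero, pow_zero, mul_one, Fin.val_succ,
        pow_succ, add_mul, Finset.sum_mul, mul_assoc, add_assoc]
    refine ⟨(Fin.cons x₀ y, z), ?_, ?_⟩
    · dsimp
      rw [key, Fin.cons_zero]
      simp only [Fin.cons_succ]
      rw [← hy, ← hx]
    · rintro ⟨f, w⟩ h
      dsimp at h
      rw [key] at h
      have h1 := hxu (f 0, (∑ i : Fin n, L.X.map projTriv.op (f i.succ) * L.e ^ (i : ℕ)) + w * L.e ^ n) h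
      have hf0 : f 0 = x₀ := congrArg Prod.fst h1
      have ht : (∑ i : Fin n, L.X.map projTriv.op (f i.succ) * L.e ^ (i : ℕ)) + w * L.e ^ n = xt :=
        congrArg Prod.snd h1
      have h2 := hyu (fun i => f i.succ, w) ht.symm
      have hft : (fun i => f i.succ) = y := congrArg Prod.fst h2
      have hw : w = z := congrArg Prod.snd h2
      refine Prod.ext ?_ hw
      funext i
      refine Fin.cases ?_ ?_ i
      · simpa using hf0
      · intro j
        simp only [Fin.cons_succ]
        exact congrFun hft j
end

section
/- Let R be a commutative ring and let ψ₁, ψ₂, ... ∈ R be pairwise non-associated prime elements which are nonzerodivisors. Define e_n = ∏_{m | n} ψ_m. Suppose x ∈ R satisfies: x·e₁^{m₁}⋯e_{n-1}^{m_{n-1}} is divisible by e_n for some m₁,...,m_{n-1} ∈ ℕ. If R is an integral domain, then x is divisible by ψ_n. -/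
/-- Let `R` be an integral domain and `ψ₁, ψ₂, ...` pairwise non-associated
prime elements (in particular nonzerodivisors). Set `e_n = ∏_{m | n} ψ_m`. If
`x·e₁^{m₁}⋯e_{n-1}^{m_{n-1}}` is divisible by `e_n`, then `x` is divisible by `ψ_n`. -/
theorem stmt15 {R : Type*} [CommRing R] [IsDomain R] (ψ : ℕ → R)
    (hprime : ∀ i, 1 ≤ i → Prime (ψ i))
    (hnondvd : ∀ i j, 1 ≤ i → 1 ≤ j → i ≠ j → ¬ ψ i ∣ ψ j)
    (e : ℕ → R) (he : ∀ i, e i = ∏ m ∈ i.divisors, ψ m)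
    (n : ℕ) (hn : 1 ≤ n) (x : R) (m : ℕ → ℕ)
    (h : e n ∣ x * ∏ i ∈ Finset.Ico 1 n, (e i) ^ m i) :
    ψ n ∣ x := by
  have hpn := hprime n hn
  have hψe : ψ n ∣ e n := by
    rw [he n]
    exact Finset.dvd_prod_of_mem _ (Nat.mem_divisors_self n (by omega))
  rcases hpn.2.2 _ _ (hψe.trans h) with hx | hprod
  · exact hx
  · exfalso
    obtain ⟨i, hi, hdvd⟩ := hpn.exists_mem_finset_dvd hprod
    rw [Finset.mem_Ico] at hi
    have hei : ψ n ∣ e i := hpn.dvd_of_dvd_pow hdvd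
    rw [he i] at hei
    obtain ⟨d, hd, hdvd'⟩ := hpn.exists_mem_finset_dvd hei
    rw [Nat.mem_divisors] at hd
    have hd1 : 1 ≤ d := Nat.pos_of_dvd_of_pos hd.1 (by omega)
    have hdn : d ≠ n := by
      have := Nat.le_of_dvd (by omega) hd.1
      omega
    exact hnondvd n d hn hd1 (Ne.symm hdn) hdvd'
end
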